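/- Let n > 0 be a real number and let u be a positive C² function on [−1,1] with u'(±1) = 0. With L f = (1−z²)f'' − nzf' and dν_n = Z_n^{-1}(1−z²)^{(n−2)/2}dz, one has ∫ (L u) (|u'|²/u)(1−z²) dν_n = (n/(n+2)) ∫ (|u'|⁴/u²)(1−z²)² dν_n − 2(n−1)/(n+2) ∫ (|u'|² u''/u)(1−z²)² dν_n. -/

import Mathlib

open MeasureTheory Real
open scoped ENNReal NNReal

theorem stmt_7 (n : ℝ) (hn : 0 < n) (u : ℝ → ℝ) (hu : ContDiff ℝ 2 u)
    (hpos : ∀ z ∈ Set.Icc (-1 : ℝ) 1, 0 < u z)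
    (hbc : deriv u 1 = 0 ∧ deriv u (-1) = 0)
    (ν : Measure ℝ)
    (hν : ν = (volume.restrict (Set.Icc (-1 : ℝ) 1)).withDensity
      (fun z => ENNReal.ofReal
        ((1 - z ^ 2) ^ ((n - 2) / 2) / (Real.sqrt π * Gamma (n / 2) / Gamma ((n + 1) / 2))))) :
    ∫ z, ((1 - z ^ 2) * deriv (deriv u) z - n * z * deriv u z)
          * ((deriv u z) ^ 2 / u z) * (1 - z ^ 2) ∂ν
      = n / (n + 2) * ∫ z, ((deriv u z) ^ 4 / (u z) ^ 2) * (1 - z ^ 2) ^ 2 ∂ν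
        - 2 * (n - 1) / (n + 2)
            * ∫ z, ((deriv u z) ^ 2 * deriv (deriv u) z / u z) * (1 - z ^ 2) ^ 2 ∂ν := by
  have h2 : (0:ℝ) < n + 2 := by linarith
  set Z : ℝ := Real.sqrt π * Gamma (n / 2) / Gamma ((n + 1) / 2) with hZdef
  have hZ : 0 < Z := div_pos (mul_pos (Real.sqrt_pos.mpr Real.pi_pos)
    (Real.Gamma_pos_of_pos (by linarith))) (Real.Gamma_pos_of_pos (by linarith))
  -- smoothness facts
  have hu1 : ContDiff ℝ 1 (deriv u) :=
    ((contDiff_succ_iff_deriv (n := 1)).mp (by norm_num at hu ⊢; exact hu)).2.2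
  have hu_c : Continuous u := hu.continuous
  have ha_c : Continuous (deriv u) := hu1.continuous
  have hb_c : Continuous (deriv (deriv u)) := hu1.continuous_deriv le_rfl
  have hud : ∀ x : ℝ, HasDerivAt u (deriv u x) x :=
    fun x => (hu.differentiable (by norm_num) x).hasDerivAt
  have had : ∀ x : ℝ, HasDerivAt (deriv u) (deriv (deriv u) x) x :=
    fun x => (hu1.differentiable (by norm_num) x).hasDerivAt
  have hune : ∀ z ∈ Set.Icc (-1:ℝ) 1, u z ≠ 0 := fun z hz => (hpos z hz).ne'
  have huicc : Set.uIcc (-1:ℝ) 1 = Set.Icc (-1:ℝ) 1 := Set.uIcc_of_le (by norm_num)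
  -- continuity of the rpow weights
  have hrpc : ∀ c : ℝ, 0 ≤ c → Continuous (fun z : ℝ => (1 - z^2) ^ c) := by
    intro c hc
    rw [continuous_iff_continuousAt]
    intro x
    exact (Real.continuousAt_rpow_const _ _ (Or.inr hc)).comp (by fun_prop)
  have hP2c : Continuous (fun z : ℝ => (1 - z^2) ^ ((n+2)/2)) := hrpc _ (by positivity)
  have hP1c : Continuous (fun z : ℝ => (1 - z^2) ^ (n/2)) := hrpc _ (by positivity)
  -- the main functions
  set A' : ℝ → ℝ := fun z => (1 - z^2) ^ ((n+2)/2) * (deriv u z ^ 4 / u z ^ 2) with hA'def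
  set B' : ℝ → ℝ := fun z => (1 - z^2) ^ ((n+2)/2) * (deriv u z ^ 2 * deriv (deriv u) z / u z)
    with hB'def
  set J' : ℝ → ℝ := fun z => z * (1 - z^2) ^ (n/2) * (deriv u z ^ 3 / u z) with hJ'def
  set H : ℝ → ℝ := fun z => (1 - z^2) ^ ((n+2)/2) * (deriv u z ^ 3 / u z) with hHdef
  set D : ℝ → ℝ := fun z => 3 * B' z - A' z - (n+2) * J' z with hDdef
  -- continuity on Icc
  have hA'c : ContinuousOn A' (Set.Icc (-1:ℝ) 1) :=
    hP2c.continuousOn.mul (ContinuousOn.div (ha_c.pow 4).continuousOn (hu_c.pow 2).continuousOn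
      (fun z hz => pow_ne_zero _ (hune z hz)))
  have hB'c : ContinuousOn B' (Set.Icc (-1:ℝ) 1) :=
    hP2c.continuousOn.mul (ContinuousOn.div ((ha_c.pow 2).mul hb_c).continuousOn
      hu_c.continuousOn hune)
  have hJ'c : ContinuousOn J' (Set.Icc (-1:ℝ) 1) :=
    (continuous_id.mul hP1c).continuousOn.mul (ContinuousOn.div (ha_c.pow 3).continuousOn
      hu_c.continuousOn hune)
  have hHc : ContinuousOn H (Set.Icc (-1:ℝ) 1) :=
    hP2c.continuousOn.mul (ContinuousOn.div (ha_c.pow 3).continuousOn hu_c.continuousOn hune)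
  have hDc : ContinuousOn D (Set.Icc (-1:ℝ) 1) :=
    ((continuousOn_const.mul hB'c).sub hA'c).sub (continuousOn_const.mul hJ'c)
  -- interval integrability
  have hA'int : IntervalIntegrable A' volume (-1) 1 :=
    (hA'c.mono (by rw [huicc])).intervalIntegrable
  have hB'int : IntervalIntegrable B' volume (-1) 1 :=
    (hB'c.mono (by rw [huicc])).intervalIntegrable
  have hJ'int : IntervalIntegrable J' volume (-1) 1 :=
    (hJ'c.mono (by rw [huicc])).intervalIntegrable
  have hDint : IntervalIntegrable D volume (-1) 1 :=
    (hDc.mono (by rw [huicc])).intervalIntegrable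
  -- derivative of H on the open interval
  have hHd : ∀ x ∈ Set.Ioo (-1:ℝ) 1, HasDerivAt H (D x) x := by
    intro x hx
    have hx1 : (0:ℝ) < 1 - x^2 := by nlinarith [hx.1, hx.2]
    have hux : u x ≠ 0 := hune x ⟨hx.1.le, hx.2.le⟩
    have d1 : HasDerivAt (fun z : ℝ => 1 - z^2) (-(2*x)) x := by
      simpa using ((hasDerivAt_pow 2 x).const_sub 1)
    have dP2 : HasDerivAt (fun z : ℝ => (1 - z^2) ^ ((n+2)/2))
        (-(2*x) * ((n+2)/2) * (1 - x^2) ^ ((n+2)/2 - 1)) x :=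
      d1.rpow_const (Or.inl hx1.ne')
    have hexp : (n+2)/2 - 1 = n/2 := by ring
    rw [hexp] at dP2
    have dq := ((had x).pow 3).div (hud x) hux
    have := dP2.mul dq
    convert this using 1
    · rfl
    · rfl
    · rfl
    simp only [hDdef, hA'def, hB'def, hJ'def, Pi.pow_apply, Pi.div_apply]
    push_cast
    field_simp
    ring
  -- FTC: the integral of D vanishes
  have hH1 : H 1 = 0 := by
    simp only [hHdef]
    norm_num [Real.zero_rpow (show (n+2)/2 ≠ 0 by positivity)]
  have hHm1 : H (-1) = 0 := by
    simp only [hHdef]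
    norm_num [Real.zero_rpow (show (n+2)/2 ≠ 0 by positivity)]
  have hftc : ∫ x in (-1:ℝ)..1, D x = 0 := by
    rw [intervalIntegral.integral_eq_sub_of_hasDeriv_right_of_le (by norm_num) hHc
      (fun x hx => (hHd x hx).hasDerivWithinAt) hDint, hH1, hHm1, sub_zero]
  have hrel : 3 * (∫ x in (-1:ℝ)..1, B' x) - (∫ x in (-1:ℝ)..1, A' x)
      - (n+2) * (∫ x in (-1:ℝ)..1, J' x) = 0 := by
    rw [← intervalIntegral.integral_const_mul, ← intervalIntegral.integral_const_mul,
      ← intervalIntegral.integral_sub (hB'int.const_mul 3) hA'int,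
      ← intervalIntegral.integral_sub ((hB'int.const_mul 3).sub hA'int) (hJ'int.const_mul (n+2))]
    exact hftc
  -- measure reduction
  have hred : ∀ g : ℝ → ℝ, ∫ z, g z ∂ν
      = (∫ z in (-1:ℝ)..1, (1 - z^2) ^ ((n-2)/2) * g z) / Z := by
    intro g
    rw [hν]
    have hm : Measurable fun z : ℝ => ((1 - z ^ 2) ^ ((n - 2) / 2) / Z).toNNReal := by
      fun_prop
    have he : (fun z : ℝ => ENNReal.ofReal ((1 - z ^ 2) ^ ((n - 2) / 2) / Z))
        = fun z : ℝ => (((1 - z ^ 2) ^ ((n - 2) / 2) / Z).toNNReal : ℝ≥0∞) := rfl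
    rw [he, integral_withDensity_eq_integral_smul hm]
    have hcongr : ∀ z ∈ Set.Icc (-1:ℝ) 1,
        (((1 - z ^ 2) ^ ((n - 2) / 2) / Z).toNNReal : ℝ≥0) • g z
        = ((1 - z^2) ^ ((n-2)/2) * g z) / Z := by
      intro z hz
      have hz2 : (0:ℝ) ≤ 1 - z^2 := by
        rcases hz with ⟨h1, h2⟩; nlinarith
      rw [NNReal.smul_def, smul_eq_mul,
        Real.coe_toNNReal _ (div_nonneg (Real.rpow_nonneg hz2 _) hZ.le)]
      ring
    rw [setIntegral_congr_fun measurableSet_Icc hcongr, integral_Icc_eq_integral_Ioc,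
      ← intervalIntegral.integral_of_le (by norm_num : (-1:ℝ) ≤ 1),
      intervalIntegral.integral_div]
  -- pointwise rewriting of the three integrands
  have hkey : ∀ z : ℝ, 0 ≤ 1 - z^2 →
      (1 - z^2) ^ ((n-2)/2) * (1 - z^2)^2 = (1 - z^2) ^ ((n+2)/2) ∧
      (1 - z^2) ^ ((n-2)/2) * (1 - z^2) = (1 - z^2) ^ (n/2) := by
    intro z hz
    rcases eq_or_lt_of_le hz with h | h
    · constructor <;> rw [← h] <;>
        norm_num [Real.zero_rpow (show (n+2)/2 ≠ 0 by positivity),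
          Real.zero_rpow (show n/2 ≠ 0 by positivity)]
    · constructor
      · rw [show (n+2)/2 = (n-2)/2 + 2 by ring, Real.rpow_add h, Real.rpow_two]
      · rw [show n/2 = (n-2)/2 + 1 by ring, Real.rpow_add h, Real.rpow_one]
  have hiA : ∫ z in (-1:ℝ)..1, (1 - z^2) ^ ((n-2)/2)
        * ((deriv u z) ^ 4 / (u z) ^ 2 * (1 - z ^ 2) ^ 2)
      = ∫ x in (-1:ℝ)..1, A' x := by
    apply intervalIntegral.integral_congr
    intro z hz
    rw [huicc] at hz
    have hz2 : (0:ℝ) ≤ 1 - z^2 := by rcases hz with ⟨h1', h2'⟩; nlinarith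
    simp only [hA'def]
    linear_combination (deriv u z ^ 4 / u z ^ 2) * (hkey z hz2).1
  have hiB : ∫ z in (-1:ℝ)..1, (1 - z^2) ^ ((n-2)/2)
        * ((deriv u z) ^ 2 * deriv (deriv u) z / u z * (1 - z ^ 2) ^ 2)
      = ∫ x in (-1:ℝ)..1, B' x := by
    apply intervalIntegral.integral_congr
    intro z hz
    rw [huicc] at hz
    have hz2 : (0:ℝ) ≤ 1 - z^2 := by rcases hz with ⟨h1', h2'⟩; nlinarith
    simp only [hB'def]
    linear_combination (deriv u z ^ 2 * deriv (deriv u) z / u z) * (hkey z hz2).1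
  have hiL : ∫ z in (-1:ℝ)..1, (1 - z^2) ^ ((n-2)/2)
        * (((1 - z ^ 2) * deriv (deriv u) z - n * z * deriv u z)
          * ((deriv u z) ^ 2 / u z) * (1 - z ^ 2))
      = ∫ x in (-1:ℝ)..1, (B' x - n * J' x) := by
    apply intervalIntegral.integral_congr
    intro z hz
    rw [huicc] at hz
    have hz2 : (0:ℝ) ≤ 1 - z^2 := by rcases hz with ⟨h1', h2'⟩; nlinarith
    simp only [hB'def, hJ'def]
    have k1 := (hkey z hz2).1
    have k2 := (hkey z hz2).2
    linear_combination (deriv u z ^ 2 * deriv (deriv u) z / u z) * k1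
      - n * z * (deriv u z ^ 3 / u z) * k2
  -- assemble
  rw [hred (fun z => ((1 - z ^ 2) * deriv (deriv u) z - n * z * deriv u z)
      * ((deriv u z) ^ 2 / u z) * (1 - z ^ 2)),
    hred (fun z => (deriv u z) ^ 4 / (u z) ^ 2 * (1 - z ^ 2) ^ 2),
    hred (fun z => (deriv u z) ^ 2 * deriv (deriv u) z / u z * (1 - z ^ 2) ^ 2),
    hiA, hiB, hiL,
    intervalIntegral.integral_sub hB'int (hJ'int.const_mul n),
    intervalIntegral.integral_const_mul]
  set IA := ∫ x in (-1:ℝ)..1, A' x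
  set IB := ∫ x in (-1:ℝ)..1, B' x
  set IJ := ∫ x in (-1:ℝ)..1, J' x
  have hIJ : IJ = (3 * IB - IA) / (n + 2) := by
    field_simp
    linarith [hrel]
  rw [hIJ]
  field_simp
  ring
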